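/- arXiv:2107.08428 — 3 statements merged into one kernel-verified Lean document; each statement's English description precedes it below -/
import Mathlib

section
/- Every locally finite game is equivalent to some finite game, that is, to a game whose game graph has only finitely many positions. -/
open scoped Classical

universe u

/-- `PosP Γ n` is the set `Pₙ` of positions from which the second player can win
within `n` rounds: `P₀` is the set of terminal positions, and
`Pₙ₊₁ = {x : every option of x has an option in Pₙ}`. -/
def PosP {V : Type*} (Γ : V → Finset V) : ℕ → Set V
  | 0 => {x | Γ x = ∅}
  | n + 1 => {x | ∀ y ∈ Γ x, ∃ z ∈ Γ y, z ∈ PosP Γ n}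

/-- `PosN Γ n` is the set `Nₙ`: for `n ≥ 1`, `Nₙ = {x : some option of x lies in Pₙ₋₁}`. -/
def PosN {V : Type*} (Γ : V → Finset V) : ℕ → Set V
  | 0 => ∅
  | n + 1 => {x | ∃ y ∈ Γ x, y ∈ PosP Γ n}

/-- The P-positions `𝒫 = ⋃ₙ Pₙ` (second player wins). -/
def PPos {V : Type*} (Γ : V → Finset V) : Set V := ⋃ n, PosP Γ n

/-- The N-positions `𝒩 = ⋃ₙ Nₙ` (first player wins). -/
def NPos {V : Type*} (Γ : V → Finset V) : Set V := ⋃ n, PosN Γ n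

/-- The D-positions `𝒟 = V ∖ (𝒫 ∪ 𝒩)` (draws). -/
def DPos {V : Type*} (Γ : V → Finset V) : Set V := (PPos Γ ∪ NPos Γ)ᶜ

/-- The mex (least natural number not attained) of the values `g y`, `y ∈ s`. -/
noncomputable def mexF {V : Type*} (s : Finset V) (g : V → ℕ∞) : ℕ :=
  sInf {n : ℕ | ∀ y ∈ s, g y ≠ (n : ℕ∞)}

/-- The approximants `𝒢ₙ` of the extended Sprague-Grundy function. -/
noncomputable def Gfun {V : Type*} (Γ : V → Finset V) : ℕ → V → ℕ∞
  | 0 => fun x => if Γ x = ∅ then 0 else ⊤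
  | n + 1 => fun x =>
      let m := mexF (Γ x) (Gfun Γ n)
      if ∀ y ∈ Γ x, Gfun Γ n y ≤ (m : ℕ∞) ∨ ∃ z ∈ Γ y, Gfun Γ n z = (m : ℕ∞)
      then (m : ℕ∞) else ⊤

/-- `x` has finite rank with (finite) Sprague-Grundy value `m`:
`𝒢ₙ(x) = m` for all sufficiently large `n`. -/
def HasGVal {V : Type*} (Γ : V → Finset V) (x : V) (m : ℕ) : Prop :=
  ∃ n₀ : ℕ, ∀ n ≥ n₀, Gfun Γ n x = (m : ℕ∞)

/-- `x` has infinite rank: `𝒢ₙ(x) = ∞` for all `n`. -/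
def InfiniteRank {V : Type*} (Γ : V → Finset V) (x : V) : Prop :=
  ∀ n : ℕ, Gfun Γ n x = ⊤

/-- The rank of `x`: the least `n` with `𝒢ₙ(x) < ∞`, or `∞` if there is none. -/
noncomputable def rank {V : Type*} (Γ : V → Finset V) (x : V) : ℕ∞ :=
  sInf ((↑) '' {n : ℕ | Gfun Γ n x ≠ ⊤})

/-- For `x` of infinite rank, the set `𝒜` with `𝒢(x) = ∞(𝒜)`:
the set of finite Sprague-Grundy values of finite-rank options of `x`. -/
def ValSet {V : Type*} (Γ : V → Finset V) (x : V) : Set ℕ :=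
  {a | ∃ y ∈ Γ x, HasGVal Γ y a}

/-- The graph of the disjunctive sum: move in exactly one coordinate. -/
noncomputable def sumGraph {V W : Type*} (Γ : V → Finset V) (Δ : W → Finset W) :
    V × W → Finset (V × W) := fun p =>
  (Γ p.1).image (fun u => (u, p.2)) ∪ (Δ p.2).image (fun w => (p.1, w))

/-- Two (positions of possibly different) games lie in the same outcome class. -/
def SameOutcome {V W : Type*} (Γ : V → Finset V) (x : V) (Δ : W → Finset W) (y : W) : Prop :=
  (x ∈ PPos Γ ↔ y ∈ PPos Δ) ∧ (x ∈ NPos Γ ↔ y ∈ NPos Δ) ∧ (x ∈ DPos Γ ↔ y ∈ DPos Δ)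

/-- Equivalence of games: `G + X` and `H + X` have the same outcome for every
locally finite game `X`. -/
def GameEquiv {V W : Type*} (Γ : V → Finset V) (x : V) (Δ : W → Finset W) (y : W) : Prop :=
  ∀ (X : Type u) (Ξ : X → Finset X) (z : X),
    SameOutcome (sumGraph Γ Ξ) (x, z) (sumGraph Δ Ξ) (y, z)

/-- The nim heap `*m`: positions `0, …, m`, where from `k` one can move to any `j < k`. -/
def nimGraph (m : ℕ) : Fin (m + 1) → Finset (Fin (m + 1)) :=
  fun k => Finset.univ.filter (fun j => j < k)

/-- The reduced graph `R(V)`: the induced graph on the complement of the P-positions. -/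
noncomputable def reducedGraph {V : Type*} (Γ : V → Finset V) :
    {x : V // x ∉ PPos Γ} → Finset {x : V // x ∉ PPos Γ} := fun x =>
  (Γ x.1).subtype (fun y => y ∉ PPos Γ)

/-- The vertex set of `R^{(k)}(V)`: positions which do not have finite rank with
Sprague-Grundy value `< k`. -/
def RkSet {V : Type*} (Γ : V → Finset V) (k : ℕ) : Set V :=
  {x | ¬ ∃ m < k, HasGVal Γ x m}

/-- The induced game graph `R^{(k)}(V)` on `RkSet Γ k`. -/
noncomputable def RkGraph {V : Type*} (Γ : V → Finset V) (k : ℕ) :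
    RkSet Γ k → Finset (RkSet Γ k) := fun x =>
  (Γ x.1).subtype (fun y => y ∈ RkSet Γ k)

/-- `V` is `k`-stable: every infinite-rank position `x`, with `𝒢(x) = ∞(𝒜)`,
has `{0, 1, …, k} ⊆ 𝒜`. -/
def kStable {V : Type*} (Γ : V → Finset V) (k : ℕ) : Prop :=
  ∀ x, InfiniteRank Γ x → ∀ j ≤ k, j ∈ ValSet Γ x

/-- `l` is a directed walk from `o` to `x` in the graph `Γ`. -/
def IsWalk {V : Type*} (Γ : V → Finset V) (o x : V) (l : List V) : Prop :=
  l.head? = some o ∧ l.getLast? = some x ∧ l.Chain' (fun a b => b ∈ Γ a)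

/-- `Γ` is a tree with root `o`: `o` has no incoming arcs, and every vertex is
reached from `o` by a unique directed walk. -/
def IsTree {V : Type*} (Γ : V → Finset V) (o : V) : Prop :=
  (∀ x, o ∉ Γ x) ∧ ∀ x, ∃! l : List V, IsWalk Γ o x l

/-- `f` is a mex labelling: `f x` is the least natural number not attained by `f`
on the options of `x`, for every `x`. -/
def MexLabelling {V : Type*} (Γ : V → Finset V) (f : V → ℕ) : Prop :=
  ∀ x, f x = sInf {n : ℕ | ∀ y ∈ Γ x, f y ≠ n}

/-! ### Auxiliary development -/

section Aux

variable {V : Type*} {W : Type*} {X : Type*}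

lemma posP_succ {Γ : V → Finset V} {n : ℕ} {x : V} :
    x ∈ PosP Γ (n+1) ↔ ∀ y ∈ Γ x, ∃ z ∈ Γ y, z ∈ PosP Γ n := Iff.rfl

lemma posP_zero {Γ : V → Finset V} {x : V} : x ∈ PosP Γ 0 ↔ Γ x = ∅ := Iff.rfl

lemma posN_succ {Γ : V → Finset V} {n : ℕ} {x : V} :
    x ∈ PosN Γ (n+1) ↔ ∃ y ∈ Γ x, y ∈ PosP Γ n := Iff.rfl

lemma posP_mono {Γ : V → Finset V} : ∀ n, PosP Γ n ⊆ PosP Γ (n+1) := by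
  intro n
  induction n with
  | zero => intro x hx y hy; simp [posP_zero.1 hx] at hy
  | succ n ih =>
      intro x hx y hy
      obtain ⟨z, hz, hzP⟩ := posP_succ.1 hx y hy
      exact ⟨z, hz, ih hzP⟩

lemma posP_le {Γ : V → Finset V} {m n : ℕ} (h : m ≤ n) : PosP Γ m ⊆ PosP Γ n := by
  induction h with
  | refl => exact le_refl _
  | step _ ih => exact _root_.le_trans ih (posP_mono _)

lemma posP_posN_disj {Γ : V → Finset V} : ∀ {n m : ℕ} {x : V},
    x ∈ PosP Γ n → x ∈ PosN Γ m → False := by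
  have key : ∀ k n m, n + m ≤ k → ∀ x : V, x ∈ PosP Γ n → x ∈ PosN Γ m → False := by
    intro k
    induction k with
    | zero =>
        intro n m hnm x hP hN
        obtain ⟨rfl, rfl⟩ : n = 0 ∧ m = 0 := by omega
        exact hN
    | succ k ih =>
        rintro n (_ | m) hnm x hP hN
        · exact hN
        · obtain ⟨y, hy, hyP⟩ := posN_succ.1 hN
          match n, hP with
          | 0, hP => simp [posP_zero.1 hP] at hy
          | (n+1), hP =>
              obtain ⟨z, hz, hzP⟩ := posP_succ.1 hP y hy
              exact ih m (n+1) (by omega) y hyP (posN_succ.2 ⟨z, hz, hzP⟩)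
  intro n m x hP hN
  exact key (n + m) n m le_rfl x hP hN

lemma mem_pPos {Γ : V → Finset V} {x : V} : x ∈ PPos Γ ↔ ∃ n, x ∈ PosP Γ n := Set.mem_iUnion

lemma mem_nPos {Γ : V → Finset V} {x : V} : x ∈ NPos Γ ↔ ∃ y ∈ Γ x, y ∈ PPos Γ := by
  constructor
  · intro h
    obtain ⟨n, hn⟩ := Set.mem_iUnion.1 h
    match n, hn with
    | (n+1), hn =>
        obtain ⟨y, hy, hyP⟩ := hn
        exact ⟨y, hy, mem_pPos.2 ⟨n, hyP⟩⟩
  · rintro ⟨y, hy, hyP⟩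
    obtain ⟨n, hn⟩ := mem_pPos.1 hyP
    exact Set.mem_iUnion.2 ⟨n+1, ⟨y, hy, hn⟩⟩

lemma pPos_nPos_disj {Γ : V → Finset V} {x : V} (hP : x ∈ PPos Γ) (hN : x ∈ NPos Γ) : False := by
  obtain ⟨n, hn⟩ := mem_pPos.1 hP
  obtain ⟨m, hm⟩ := Set.mem_iUnion.1 hN
  exact posP_posN_disj hn hm

/-! ### mex facts -/

lemma mexF_not_attained {s : Finset V} {g : V → ℕ∞} :
    ∀ y ∈ s, g y ≠ (mexF s g : ℕ∞) := by
  have hne : {n : ℕ | ∀ y ∈ s, g y ≠ (n : ℕ∞)}.Nonempty := by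
    refine ⟨(s.sup fun y => (g y).toNat) + 1, fun y hy => ?_⟩
    intro hgy
    have : (g y).toNat ≤ s.sup fun y => (g y).toNat :=
      Finset.le_sup (f := fun y => (g y).toNat) hy
    rw [hgy, ENat.toNat_coe] at this
    omega
  exact Nat.sInf_mem hne

lemma mexF_attained {s : Finset V} {g : V → ℕ∞} {c : ℕ} (hc : c < mexF s g) :
    ∃ y ∈ s, g y = (c : ℕ∞) := by
  have := Nat.notMem_of_lt_sInf hc
  simpa using this

lemma mexF_eq {s : Finset V} {g : V → ℕ∞} {m : ℕ}
    (h1 : ∀ y ∈ s, g y ≠ (m : ℕ∞)) (h2 : ∀ c < m, ∃ y ∈ s, g y = (c : ℕ∞)) :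
    mexF s g = m := by
  refine le_antisymm (Nat.sInf_le h1) ?_
  by_contra h
  push_neg at h
  obtain ⟨y, hy, hgy⟩ := h2 _ h
  exact mexF_not_attained y hy hgy

end Aux
section Aux2

variable {V : Type*} {W : Type*} {X : Type*}

lemma gfun_zero (Γ : V → Finset V) (x : V) :
    Gfun Γ 0 x = if Γ x = ∅ then 0 else ⊤ := rfl

lemma gfun_succ (Γ : V → Finset V) (n : ℕ) (x : V) :
    Gfun Γ (n+1) x =
      if ∀ y ∈ Γ x, Gfun Γ n y ≤ (mexF (Γ x) (Gfun Γ n) : ℕ∞) ∨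
          ∃ z ∈ Γ y, Gfun Γ n z = (mexF (Γ x) (Gfun Γ n) : ℕ∞)
      then (mexF (Γ x) (Gfun Γ n) : ℕ∞) else ⊤ := rfl

lemma enat_top_not_le {a : ℕ} : ¬ ((⊤ : ℕ∞) ≤ (a : ℕ∞)) := by
  simp

lemma enat_le_coe {u : ℕ∞} {a : ℕ} (h : u ≤ (a : ℕ∞)) : ∃ c : ℕ, u = (c : ℕ∞) ∧ c ≤ a := by
  lift u to ℕ using (lt_of_le_of_lt h (by simp [lt_top_iff_ne_top])).ne
  exact ⟨u, rfl, by exact_mod_cast h⟩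

lemma gfun_succ_eq_iff {Γ : V → Finset V} {n : ℕ} {x : V} {m : ℕ} :
    Gfun Γ (n+1) x = (m : ℕ∞) ↔
      mexF (Γ x) (Gfun Γ n) = m ∧
      ∀ y ∈ Γ x, Gfun Γ n y ≤ (m : ℕ∞) ∨ ∃ z ∈ Γ y, Gfun Γ n z = (m : ℕ∞) := by
  rw [gfun_succ]
  split_ifs with h
  · constructor
    · intro he
      have hm : mexF (Γ x) (Gfun Γ n) = m := by exact_mod_cast he
      exact ⟨hm, by rwa [hm] at h⟩
    · rintro ⟨hm, -⟩; exact_mod_cast hm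
  · constructor
    · intro he; exact absurd he (by simp)
    · rintro ⟨hm, hside⟩; exact absurd (by rwa [hm]) h

lemma gfun_zero_eq_iff {Γ : V → Finset V} {x : V} {m : ℕ} :
    Gfun Γ 0 x = (m : ℕ∞) ↔ Γ x = ∅ ∧ m = 0 := by
  rw [gfun_zero]
  split_ifs with h
  · simp only [h, true_and]
    constructor
    · intro he; exact_mod_cast he.symm
    · rintro rfl; simp
  · simp [h]

lemma gfun_step {Γ : V → Finset V} : ∀ {n : ℕ} {x : V} {a : ℕ},
    Gfun Γ n x = (a : ℕ∞) → Gfun Γ (n+1) x = (a : ℕ∞) := by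
  intro n
  induction n with
  | zero =>
      intro x a h
      obtain ⟨hx, rfl⟩ := gfun_zero_eq_iff.1 h
      refine gfun_succ_eq_iff.2 ⟨?_, ?_⟩
      · refine mexF_eq (fun y hy => by simp [hx] at hy) (fun c hc => by omega)
      · intro y hy; simp [hx] at hy
  | succ n ih =>
      intro x a h
      obtain ⟨hmex, hside⟩ := gfun_succ_eq_iff.1 h
      have hnot : ∀ y ∈ Γ x, Gfun Γ n y ≠ (a : ℕ∞) := by
        rw [← hmex]; exact mexF_not_attained
      refine gfun_succ_eq_iff.2 ⟨?_, ?_⟩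
      · refine mexF_eq ?_ ?_
        · -- no option attains a at stage n+1
          intro y hy hya
          rcases hside y hy with hle | ⟨z, hz, hza⟩
          · obtain ⟨c, hc, hca⟩ := enat_le_coe hle
            have := ih hc
            rw [this] at hya
            exact hnot y hy (by rw [hc]; exact_mod_cast hya)
          · -- y has an option z of value a at stage n, so Gfun (n+1) y ≠ a
            have hz' : Gfun Γ (n+1) z = (a : ℕ∞) := ih hza
            obtain ⟨hmy, -⟩ := gfun_succ_eq_iff.1 hya
            exact mexF_not_attained z hz (by rw [hmy]; exact hza)
        · intro c hc
          rw [← hmex] at hc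
          obtain ⟨y, hy, hyc⟩ := mexF_attained hc
          exact ⟨y, hy, ih hyc⟩
      · intro y hy
        rcases hside y hy with hle | ⟨z, hz, hza⟩
        · obtain ⟨c, hc, hca⟩ := enat_le_coe hle
          exact Or.inl (by rw [ih hc]; exact_mod_cast hca)
        · exact Or.inr ⟨z, hz, ih hza⟩

lemma gfun_stab {Γ : V → Finset V} {n m : ℕ} {x : V} {a : ℕ}
    (hnm : n ≤ m) (h : Gfun Γ n x = (a : ℕ∞)) : Gfun Γ m x = (a : ℕ∞) := by
  induction hnm with
  | refl => exact h
  | step _ ih => exact gfun_step ih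

lemma hasGVal_of_eq {Γ : V → Finset V} {n : ℕ} {x : V} {a : ℕ}
    (h : Gfun Γ n x = (a : ℕ∞)) : HasGVal Γ x a :=
  ⟨n, fun m hm => gfun_stab hm h⟩

lemma hasGVal_unique {Γ : V → Finset V} {x : V} {a b : ℕ}
    (ha : HasGVal Γ x a) (hb : HasGVal Γ x b) : a = b := by
  obtain ⟨n₁, h1⟩ := ha
  obtain ⟨n₂, h2⟩ := hb
  have e1 := h1 (max n₁ n₂) (le_max_left _ _)
  have e2 := h2 (max n₁ n₂) (le_max_right _ _)
  rw [e1] at e2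
  exact_mod_cast e2

lemma hasGVal_or_infiniteRank (Γ : V → Finset V) (x : V) :
    (∃ a, HasGVal Γ x a) ∨ InfiniteRank Γ x := by
  by_cases h : ∀ n, Gfun Γ n x = ⊤
  · exact Or.inr h
  · push_neg at h
    obtain ⟨n, hn⟩ := h
    lift Gfun Γ n x to ℕ using hn with c hc
    exact Or.inl ⟨c, hasGVal_of_eq hc.symm⟩

lemma not_infiniteRank_of_hasGVal {Γ : V → Finset V} {x : V} {a : ℕ}
    (h : HasGVal Γ x a) : ¬ InfiniteRank Γ x := by
  intro hinf
  obtain ⟨n₀, hn⟩ := h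
  have := hn n₀ le_rfl
  rw [hinf n₀] at this
  simp at this

/-- If `x` has value `a`, every `b < a` is the value of some option of `x`. -/
lemma hasGVal_mex_exists {Γ : V → Finset V} {x : V} {a b : ℕ}
    (h : HasGVal Γ x a) (hb : b < a) : ∃ y ∈ Γ x, HasGVal Γ y b := by
  obtain ⟨n₀, hn⟩ := h
  have := gfun_succ_eq_iff.1 (hn (n₀+1) (Nat.le_succ _))
  obtain ⟨y, hy, hyv⟩ := mexF_attained (this.1 ▸ hb)
  exact ⟨y, hy, hasGVal_of_eq hyv⟩

/-- No option of `x` has the same value as `x`. -/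
lemma hasGVal_no_option {Γ : V → Finset V} {x y : V} {a : ℕ}
    (h : HasGVal Γ x a) (hy : y ∈ Γ x) (hya : HasGVal Γ y a) : False := by
  obtain ⟨n₁, h1⟩ := h
  obtain ⟨n₂, h2⟩ := hya
  set N := max n₁ n₂
  have e1 := gfun_succ_eq_iff.1 (h1 (N+1) (le_trans (le_max_left _ _) (Nat.le_succ _)))
  exact mexF_not_attained y hy (by rw [e1.1]; exact h2 N (le_max_right _ _))

/-- If `x` has value `a` and its option `y` has infinite rank, then `y` has an
option of value `a`. -/
lemma hasGVal_side {Γ : V → Finset V} {x y : V} {a : ℕ}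
    (h : HasGVal Γ x a) (hy : y ∈ Γ x) (hinf : InfiniteRank Γ y) :
    ∃ z ∈ Γ y, HasGVal Γ z a := by
  obtain ⟨n₀, hn⟩ := h
  obtain ⟨-, hside⟩ := gfun_succ_eq_iff.1 (hn (n₀+1) (Nat.le_succ _))
  rcases hside y hy with hle | ⟨z, hz, hza⟩
  · rw [hinf n₀] at hle; exact absurd hle enat_top_not_le
  · exact ⟨z, hz, hasGVal_of_eq hza⟩

end Aux2
section Aux3

variable {V : Type*} {W : Type*} {X : Type*}

/-- The (eventual) Sprague-Grundy value of `x`, as an element of `ℕ∞`. -/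
noncomputable def gval {V : Type*} (Γ : V → Finset V) (x : V) : ℕ∞ :=
  if h : ∃ a, HasGVal Γ x a then ((h.choose : ℕ) : ℕ∞) else ⊤

lemma gval_eq_coe_iff {Γ : V → Finset V} {x : V} {a : ℕ} :
    gval Γ x = (a : ℕ∞) ↔ HasGVal Γ x a := by
  unfold gval
  split_ifs with h
  · constructor
    · intro he
      have : h.choose = a := by exact_mod_cast he
      exact this ▸ h.choose_spec
    · intro ha
      have : h.choose = a := hasGVal_unique h.choose_spec ha
      exact_mod_cast congrArg (fun k : ℕ => (k : ℕ∞)) this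
  · constructor
    · intro he; exact absurd he (by simp)
    · intro ha; exact absurd ⟨a, ha⟩ h

lemma gval_eq_top_iff {Γ : V → Finset V} {x : V} :
    gval Γ x = ⊤ ↔ InfiniteRank Γ x := by
  unfold gval
  split_ifs with h
  · simp only [ENat.coe_ne_top, false_iff]
    exact fun hinf => not_infiniteRank_of_hasGVal h.choose_spec hinf
  · simp only [true_iff]
    rcases hasGVal_or_infiniteRank Γ x with ⟨a, ha⟩ | hinf
    · exact absurd ⟨a, ha⟩ h
    · exact hinf

lemma gfun_eventually_gval (Γ : V → Finset V) (y : V) :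
    ∀ᶠ n in Filter.atTop, Gfun Γ n y = gval Γ y := by
  rcases hasGVal_or_infiniteRank Γ y with ⟨a, ha⟩ | hinf
  · obtain ⟨n₀, hn⟩ := ha
    refine Filter.eventually_atTop.2 ⟨n₀, fun n hn' => ?_⟩
    rw [hn n hn', gval_eq_coe_iff.2 ⟨n₀, hn⟩]
  · refine Filter.Eventually.of_forall (fun n => ?_)
    rw [hinf n, gval_eq_top_iff.2 hinf]

lemma exists_uniform_stage (Γ : V → Finset V) (s : Finset V) :
    ∃ N₀ : ℕ, ∀ n ≥ N₀, ∀ y ∈ s, Gfun Γ n y = gval Γ y := by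
  have h : ∀ᶠ n in Filter.atTop, ∀ y ∈ s, Gfun Γ n y = gval Γ y :=
    (Filter.eventually_all_finset s).2 (fun y _ => gfun_eventually_gval Γ y)
  exact Filter.eventually_atTop.1 h

lemma mexF_congr {s : Finset V} {g g' : V → ℕ∞} (h : ∀ y ∈ s, g y = g' y) :
    mexF s g = mexF s g' := by
  unfold mexF
  congr 1
  ext n
  exact ⟨fun H y hy => h y hy ▸ H y hy, fun H y hy => (h y hy).symm ▸ H y hy⟩

/-- If all options of `x` have finite rank, so does `x`, with value the mex. -/
lemma finiteRank_of_options {Γ : V → Finset V} {x : V}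
    (h : ∀ y ∈ Γ x, ∃ a, HasGVal Γ y a) :
    HasGVal Γ x (mexF (Γ x) (gval Γ)) := by
  set m := mexF (Γ x) (gval Γ) with hm
  -- for each option with value > m, pick a counter-option of value m
  have hwit : ∀ᶠ n in Filter.atTop, ∀ y ∈ Γ x,
      (Gfun Γ n y = gval Γ y ∧
       ∀ c : ℕ, gval Γ y = (c : ℕ∞) → m < c → ∃ z ∈ Γ y, Gfun Γ n z = (m : ℕ∞)) := by
    refine (Filter.eventually_all_finset (Γ x)).2 (fun y hy => ?_)
    refine (gfun_eventually_gval Γ y).and ?_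
    obtain ⟨a, ha⟩ := h y hy
    by_cases hca : m < a
    · obtain ⟨z, hz, hzm⟩ := hasGVal_mex_exists ha hca
      obtain ⟨n₀, hn⟩ := hzm
      refine Filter.eventually_atTop.2 ⟨n₀, fun n hn' c hc hmc => ⟨z, hz, hn n hn'⟩⟩
    · refine Filter.Eventually.of_forall (fun n c hc hmc => ?_)
      have : c = a := hasGVal_unique (gval_eq_coe_iff.1 hc) ha
      omega
  obtain ⟨N, hN⟩ := Filter.eventually_atTop.1 hwit
  refine hasGVal_of_eq (n := N + 1) (gfun_succ_eq_iff.2 ⟨?_, ?_⟩)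
  · rw [mexF_congr (fun y hy => (hN N le_rfl y hy).1)]
  · intro y hy
    obtain ⟨heq, hcnt⟩ := hN N le_rfl y hy
    obtain ⟨a, ha⟩ := h y hy
    have hgy : gval Γ y = (a : ℕ∞) := gval_eq_coe_iff.2 ha
    by_cases hle : a ≤ m
    · exact Or.inl (by rw [heq, hgy]; exact_mod_cast hle)
    · exact Or.inr (hcnt a hgy (by omega))

/-- `Pₙ` is exactly the set where `𝒢ₙ` vanishes. -/
lemma posP_iff_gfun_zero {Γ : V → Finset V} : ∀ {n : ℕ} {x : V},
    x ∈ PosP Γ n ↔ Gfun Γ n x = ((0 : ℕ) : ℕ∞) := by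
  intro n
  induction n with
  | zero =>
      intro x
      rw [posP_zero, gfun_zero_eq_iff]
      simp
  | succ n ih =>
      intro x
      constructor
      · intro hP
        refine gfun_succ_eq_iff.2 ⟨?_, ?_⟩
        · refine mexF_eq (fun y hy hy0 => ?_) (fun c hc => by omega)
          have hyP : y ∈ PosP Γ n := ih.2 hy0
          obtain ⟨z, hz, hzP⟩ := posP_succ.1 hP y hy
          exact posP_posN_disj hyP (posN_succ.2 ⟨z, hz, hzP⟩)
        · intro y hy
          obtain ⟨z, hz, hzP⟩ := posP_succ.1 hP y hy
          exact Or.inr ⟨z, hz, ih.1 hzP⟩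
      · intro hG
        obtain ⟨hmex, hside⟩ := gfun_succ_eq_iff.1 hG
        refine posP_succ.2 (fun y hy => ?_)
        rcases hside y hy with hle | ⟨z, hz, hz0⟩
        · obtain ⟨c, hc, hc0⟩ := enat_le_coe hle
          have : c = 0 := by omega
          subst this
          exact absurd hc (hmex ▸ mexF_not_attained y hy)
        · exact ⟨z, hz, ih.2 hz0⟩

lemma mem_pPos_iff_hasGVal_zero {Γ : V → Finset V} {x : V} :
    x ∈ PPos Γ ↔ HasGVal Γ x 0 := by
  constructor
  · intro h
    obtain ⟨n, hn⟩ := mem_pPos.1 h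
    exact hasGVal_of_eq (posP_iff_gfun_zero.1 hn)
  · intro h
    obtain ⟨n₀, hn⟩ := h
    exact mem_pPos.2 ⟨n₀, posP_iff_gfun_zero.2 (hn n₀ le_rfl)⟩

end Aux3
section Aux4

variable {V : Type*} {W : Type*} {X : Type*}

lemma sumGraph_fst {Γ : V → Finset V} {Δ : W → Finset W} {p u : V} (h : u ∈ Γ p) (q : W) :
    (u, q) ∈ sumGraph Γ Δ (p, q) := by
  unfold sumGraph
  exact Finset.mem_union_left _ (Finset.mem_image_of_mem _ h)

lemma sumGraph_snd {Γ : V → Finset V} {Δ : W → Finset W} {q w : W} (h : w ∈ Δ q) (p : V) :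
    (p, w) ∈ sumGraph Γ Δ (p, q) := by
  unfold sumGraph
  exact Finset.mem_union_right _ (Finset.mem_image_of_mem _ h)

lemma sumGraph_cases {Γ : V → Finset V} {Δ : W → Finset W} {p : V} {q : W} {o : V × W}
    (h : o ∈ sumGraph Γ Δ (p, q)) :
    (∃ u ∈ Γ p, o = (u, q)) ∨ (∃ w ∈ Δ q, o = (p, w)) := by
  unfold sumGraph at h
  rcases Finset.mem_union.1 h with h | h <;>
    obtain ⟨u, hu, rfl⟩ := Finset.mem_image.1 h
  · exact Or.inl ⟨u, hu, rfl⟩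
  · exact Or.inr ⟨u, hu, rfl⟩

lemma sumGraph_eq_empty_iff {Γ : V → Finset V} {Δ : W → Finset W} {p : V} {q : W} :
    sumGraph Γ Δ (p, q) = ∅ ↔ Γ p = ∅ ∧ Δ q = ∅ := by
  unfold sumGraph
  simp [Finset.union_eq_empty, Finset.image_eq_empty]

/-- The key Sprague-Grundy--Smith sum theorem at the level of the approximants. -/
lemma gfun_sum (Γ : V → Finset V) (Δ : W → Finset W) :
    ∀ K : ℕ, ∀ {m n : ℕ} {p : V} {q : W} {a b : ℕ}, m + n = K →
      Gfun Γ m p = (a : ℕ∞) → Gfun Δ n q = (b : ℕ∞) →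
      Gfun (sumGraph Γ Δ) K (p, q) = ((a ^^^ b : ℕ) : ℕ∞) := by
  intro K
  induction K using Nat.strong_induction_on with
  | _ K IH =>
  intro m n p q a b hK hp hq
  match K, hK with
  | 0, hK =>
      obtain ⟨rfl, rfl⟩ : m = 0 ∧ n = 0 := by omega
      obtain ⟨he1, rfl⟩ := gfun_zero_eq_iff.1 hp
      obtain ⟨he2, rfl⟩ := gfun_zero_eq_iff.1 hq
      exact gfun_zero_eq_iff.2 ⟨sumGraph_eq_empty_iff.2 ⟨he1, he2⟩, rfl⟩
  | (k+1), hK => ?_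
  set M := a ^^^ b with hM
  have hmpos : Γ p ≠ ∅ → ∃ m', m = m' + 1 := by
    intro hne
    match m, hp with
    | 0, hp => obtain ⟨he, -⟩ := gfun_zero_eq_iff.1 hp; exact absurd he hne
    | (m'+1), hp => exact ⟨m', rfl⟩
  have hnpos : Δ q ≠ ∅ → ∃ n', n = n' + 1 := by
    intro hne
    match n, hq with
    | 0, hq => obtain ⟨he, -⟩ := gfun_zero_eq_iff.1 hq; exact absurd he hne
    | (n'+1), hq => exact ⟨n', rfl⟩
  have hapos : 0 < a → ∃ m', m = m' + 1 := by
    intro ha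
    match m, hp with
    | 0, hp => obtain ⟨-, h0⟩ := gfun_zero_eq_iff.1 hp; omega
    | (m'+1), hp => exact ⟨m', rfl⟩
  have hbpos : 0 < b → ∃ n', n = n' + 1 := by
    intro hb
    match n, hq with
    | 0, hq => obtain ⟨-, h0⟩ := gfun_zero_eq_iff.1 hq; omega
    | (n'+1), hq => exact ⟨n', rfl⟩
  have IHk : ∀ {m' n' : ℕ} {p' : V} {q' : W} {c d : ℕ}, m' + n' ≤ k →
      Gfun Γ m' p' = (c : ℕ∞) → Gfun Δ n' q' = (d : ℕ∞) →
      Gfun (sumGraph Γ Δ) k (p', q') = ((c ^^^ d : ℕ) : ℕ∞) := by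
    intro m' n' p' q' c d hle h1 h2
    exact gfun_stab hle (IH (m' + n') (by omega) rfl h1 h2)
  -- Analysis of a p-side option (p', q).
  have pana : ∀ p' ∈ Γ p,
      (∃ c : ℕ, c < a ∧ Gfun (sumGraph Γ Δ) k (p', q) = ((c ^^^ b : ℕ) : ℕ∞)) ∨
      (∃ z ∈ Γ p', Gfun (sumGraph Γ Δ) k (z, q) = (M : ℕ∞)) := by
    intro p' hp'
    obtain ⟨m', rfl⟩ := hmpos (Finset.ne_empty_of_mem hp')
    obtain ⟨hPmex, hPside⟩ := gfun_succ_eq_iff.1 hp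
    rcases hPside p' hp' with hle | ⟨z, hz, hza⟩
    · obtain ⟨c, hc, hca⟩ := enat_le_coe hle
      have hne : c ≠ a := fun h =>
        mexF_not_attained p' hp' (by rw [hPmex, ← h]; exact hc)
      exact Or.inl ⟨c, by omega, IHk (by omega) hc hq⟩
    · exact Or.inr ⟨z, hz, IHk (by omega) hza hq⟩
  have qana : ∀ q' ∈ Δ q,
      (∃ d : ℕ, d < b ∧ Gfun (sumGraph Γ Δ) k (p, q') = ((a ^^^ d : ℕ) : ℕ∞)) ∨
      (∃ z ∈ Δ q', Gfun (sumGraph Γ Δ) k (p, z) = (M : ℕ∞)) := by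
    intro q' hq'
    obtain ⟨n', rfl⟩ := hnpos (Finset.ne_empty_of_mem hq')
    obtain ⟨hQmex, hQside⟩ := gfun_succ_eq_iff.1 hq
    rcases hQside q' hq' with hle | ⟨z, hz, hza⟩
    · obtain ⟨d, hd, hdb⟩ := enat_le_coe hle
      have hne : d ≠ b := fun h =>
        mexF_not_attained q' hq' (by rw [hQmex, ← h]; exact hd)
      exact Or.inl ⟨d, by omega, IHk (by omega) hp hd⟩
    · exact Or.inr ⟨z, hz, IHk (by omega) hp hza⟩
  -- an option of the sum whose stage-k value is M yields a contradiction
  have no_M : ∀ o ∈ sumGraph Γ Δ (p, q), Gfun (sumGraph Γ Δ) k o ≠ (M : ℕ∞) := by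
    intro o ho hoM
    rcases sumGraph_cases ho with ⟨p', hp', rfl⟩ | ⟨q', hq', rfl⟩
    · rcases pana p' hp' with ⟨c, hca, hval⟩ | ⟨z, hz, hzM⟩
      · rw [hval] at hoM
        have : c ^^^ b = M := by exact_mod_cast hoM
        have : c = a := by
          have := congrArg (· ^^^ b) this
          simpa [xor_cancel_right, hM] using this
        omega
      · -- (p', q) has the option (z, q) of value M at stage k, so its value
        -- at stage k+1 cannot be M; but it is M at stages ≥ k.
        have hk1 : Gfun (sumGraph Γ Δ) (k+1) (p', q) = (M : ℕ∞) := gfun_step hoM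
        obtain ⟨hmex', -⟩ := gfun_succ_eq_iff.1 hk1
        exact mexF_not_attained (s := sumGraph Γ Δ (p', q)) (z, q)
          (sumGraph_fst hz q) (by rw [hmex']; exact hzM)
    · rcases qana q' hq' with ⟨d, hdb, hval⟩ | ⟨z, hz, hzM⟩
      · rw [hval] at hoM
        have : a ^^^ d = M := by exact_mod_cast hoM
        have : d = b := by
          have := congrArg (a ^^^ ·) this
          simpa [xor_cancel_left, hM] using this
        omega
      · have hk1 : Gfun (sumGraph Γ Δ) (k+1) (p, q') = (M : ℕ∞) := gfun_step hoM
        obtain ⟨hmex', -⟩ := gfun_succ_eq_iff.1 hk1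
        exact mexF_not_attained (s := sumGraph Γ Δ (p, q')) (p, z)
          (sumGraph_snd hz p) (by rw [hmex']; exact hzM)
  -- every value < M is attained at stage k among the options
  have attain : ∀ v < M, ∃ o ∈ sumGraph Γ Δ (p, q),
      Gfun (sumGraph Γ Δ) k o = (v : ℕ∞) := by
    intro v hv
    rcases Nat.lt_xor_cases hv with hlt | hlt
    · -- v ^^^ b < a : move in the first component
      obtain ⟨m', rfl⟩ := hapos (by omega)
      obtain ⟨hPmex, -⟩ := gfun_succ_eq_iff.1 hp
      obtain ⟨p', hp', hval⟩ := mexF_attained (s := Γ p) (hPmex ▸ hlt)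
      refine ⟨(p', q), sumGraph_fst hp' q, ?_⟩
      have := IHk (by omega) hval hq
      rwa [xor_cancel_right] at this
    · -- v ^^^ a < b : move in the second component
      obtain ⟨n', rfl⟩ := hbpos (by omega)
      obtain ⟨hQmex, -⟩ := gfun_succ_eq_iff.1 hq
      obtain ⟨q', hq', hval⟩ := mexF_attained (s := Δ q) (hQmex ▸ hlt)
      refine ⟨(p, q'), sumGraph_snd hq' p, ?_⟩
      have := IHk (by omega) hp hval
      rwa [Nat.xor_comm, xor_cancel_right] at this
  -- now assemble
  refine gfun_succ_eq_iff.2 ⟨mexF_eq no_M ?_, ?_⟩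
  · intro c hc
    exact attain c hc
  · -- side condition for the sum
    intro o ho
    rcases sumGraph_cases ho with ⟨p', hp', rfl⟩ | ⟨q', hq', rfl⟩
    · rcases pana p' hp' with ⟨c, hca, hval⟩ | ⟨z, hz, hzM⟩
      · by_cases hle : c ^^^ b ≤ M
        · exact Or.inl (by rw [hval]; exact_mod_cast hle)
        · -- M < c ^^^ b, c < a: counter-move in the second component
          have hlt : M < c ^^^ b := by omega
          rcases Nat.lt_xor_cases hlt with h1 | h1
          · rw [hM, xor_cancel_right] at h1; omega
          · -- M ^^^ c < b
            obtain ⟨n', rfl⟩ := hbpos (by omega)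
            obtain ⟨hQmex, -⟩ := gfun_succ_eq_iff.1 hq
            obtain ⟨q'', hq'', hval''⟩ := mexF_attained (s := Δ q) (hQmex ▸ h1)
            -- need Gfun Γ ? p' = c at a stage compatible with IH
            obtain ⟨m', rfl⟩ := hmpos (Finset.ne_empty_of_mem hp')
            obtain ⟨hPmex, hPside⟩ := gfun_succ_eq_iff.1 hp
            rcases hPside p' hp' with hle' | ⟨z, hz, hza⟩
            · obtain ⟨c', hc', -⟩ := enat_le_coe hle'
              have hcc : c' = c := by
                have := IHk (m' := m') (n' := n' + 1) (by omega) hc' hq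
                rw [hval] at this
                have h2 : (c ^^^ b : ℕ) = (c' ^^^ b : ℕ) := by exact_mod_cast this
                have := congrArg (· ^^^ b) h2
                simpa [xor_cancel_right] using this.symm
              subst hcc
              refine Or.inr ⟨(p', q''), sumGraph_snd hq'' p', ?_⟩
              have := IHk (by omega) hc' hval''
              have hMeq : c' ^^^ (M ^^^ c') = M := by
                rw [Nat.xor_comm M c', xor_cancel_left]
              rwa [hMeq] at this
            · refine Or.inr ⟨(z, q), sumGraph_fst hz q, IHk (by omega) hza hq⟩
      · exact Or.inr ⟨(z, q), sumGraph_fst hz q, hzM⟩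
    · rcases qana q' hq' with ⟨d, hdb, hval⟩ | ⟨z, hz, hzM⟩
      · by_cases hle : a ^^^ d ≤ M
        · exact Or.inl (by rw [hval]; exact_mod_cast hle)
        · have hlt : M < a ^^^ d := by omega
          rcases Nat.lt_xor_cases hlt with h1 | h1
          · -- M ^^^ d < a : counter-move in the first component
            obtain ⟨m', rfl⟩ := hapos (by omega)
            obtain ⟨hPmex, -⟩ := gfun_succ_eq_iff.1 hp
            obtain ⟨p'', hp'', hval''⟩ := mexF_attained (s := Γ p) (hPmex ▸ h1)
            obtain ⟨n', rfl⟩ := hnpos (Finset.ne_empty_of_mem hq')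
            obtain ⟨hQmex, hQside⟩ := gfun_succ_eq_iff.1 hq
            rcases hQside q' hq' with hle' | ⟨z, hz, hza⟩
            · obtain ⟨d', hd', -⟩ := enat_le_coe hle'
              have hdd : d' = d := by
                have := IHk (m' := m' + 1) (n' := n') (by omega) hp hd'
                rw [hval] at this
                have h2 : (a ^^^ d : ℕ) = (a ^^^ d' : ℕ) := by exact_mod_cast this
                have := congrArg (a ^^^ ·) h2
                simpa [xor_cancel_left] using this.symm
              subst hdd
              refine Or.inr ⟨(p'', q'), sumGraph_fst hp'' q', ?_⟩
              have := IHk (by omega) hval'' hd'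
              have hMeq : (M ^^^ d') ^^^ d' = M := xor_cancel_right _ _
              rwa [hMeq] at this
            · refine Or.inr ⟨(p, z), sumGraph_snd hz p, IHk (by omega) hp hza⟩
          · rw [hM, Nat.xor_comm a b, xor_cancel_right] at h1; omega
      · exact Or.inr ⟨(p, z), sumGraph_snd hz p, hzM⟩

end Aux4
section Aux5

variable {V : Type*} {W : Type*} {X : Type*}

lemma hasGVal_sum {Γ : V → Finset V} {Δ : W → Finset W} {p : V} {q : W} {a b : ℕ}
    (hp : HasGVal Γ p a) (hq : HasGVal Δ q b) :
    HasGVal (sumGraph Γ Δ) (p, q) (a ^^^ b) := by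
  obtain ⟨m, hm⟩ := hp
  obtain ⟨n, hn⟩ := hq
  exact hasGVal_of_eq (gfun_sum Γ Δ (m + n) rfl (hm m le_rfl) (hn n le_rfl))

/-- A position whose options have exactly the right value structure for `b`
has value `b`. -/
lemma hasGVal_of_options_spec {Γ : V → Finset V} {x : V} {b : ℕ}
    (h1 : ∀ y ∈ Γ x, ¬ HasGVal Γ y b)
    (h2 : ∀ c < b, ∃ y ∈ Γ x, HasGVal Γ y c)
    (h3 : ∀ y ∈ Γ x, InfiniteRank Γ y → ∃ z ∈ Γ y, HasGVal Γ z b) :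
    HasGVal Γ x b := by
  have hPy : ∀ᶠ n in Filter.atTop, ∀ y ∈ Γ x,
      (Gfun Γ n y = gval Γ y ∧
        (gval Γ y = ⊤ → ∃ z ∈ Γ y, Gfun Γ n z = (b : ℕ∞)) ∧
        (∀ c : ℕ, gval Γ y = (c : ℕ∞) → b < c → ∃ z ∈ Γ y, Gfun Γ n z = (b : ℕ∞))) := by
    refine (Filter.eventually_all_finset (Γ x)).2 (fun y hy => ?_)
    refine (gfun_eventually_gval Γ y).and (Filter.Eventually.and ?_ ?_)
    · by_cases htop : gval Γ y = ⊤
      · obtain ⟨z, hz, hzb⟩ := h3 y hy (gval_eq_top_iff.1 htop)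
        obtain ⟨n₀, hn⟩ := hzb
        exact Filter.eventually_atTop.2 ⟨n₀, fun n hn' _ => ⟨z, hz, hn n hn'⟩⟩
      · exact Filter.Eventually.of_forall (fun n h => absurd h htop)
    · rcases hasGVal_or_infiniteRank Γ y with ⟨a, ha⟩ | hinf
      · by_cases hba : b < a
        · obtain ⟨z, hz, hzb⟩ := hasGVal_mex_exists ha hba
          obtain ⟨n₀, hn⟩ := hzb
          exact Filter.eventually_atTop.2 ⟨n₀, fun n hn' c hc hbc => ⟨z, hz, hn n hn'⟩⟩
        · refine Filter.Eventually.of_forall (fun n c hc hbc => ?_)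
          have : c = a := hasGVal_unique (gval_eq_coe_iff.1 hc) ha
          omega
      · refine Filter.Eventually.of_forall (fun n c hc hbc => ?_)
        rw [gval_eq_top_iff.2 hinf] at hc
        exact absurd hc.symm (by simp)
  have hQ : ∀ᶠ n in Filter.atTop, ∀ c ∈ Finset.range b, ∃ y ∈ Γ x, Gfun Γ n y = (c : ℕ∞) := by
    refine (Filter.eventually_all_finset (Finset.range b)).2 (fun c hc => ?_)
    obtain ⟨y, hy, hyc⟩ := h2 c (Finset.mem_range.1 hc)
    obtain ⟨n₀, hn⟩ := hyc
    exact Filter.eventually_atTop.2 ⟨n₀, fun n hn' => ⟨y, hy, hn n hn'⟩⟩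
  obtain ⟨N, hN⟩ := Filter.eventually_atTop.1 (hPy.and hQ)
  obtain ⟨hP, hQ'⟩ := hN N le_rfl
  refine hasGVal_of_eq (n := N + 1) (gfun_succ_eq_iff.2 ⟨mexF_eq ?_ ?_, ?_⟩)
  · intro y hy hyb
    obtain ⟨heq, -, -⟩ := hP y hy
    rw [heq] at hyb
    exact h1 y hy (gval_eq_coe_iff.1 hyb)
  · intro c hc
    exact hQ' c (Finset.mem_range.2 hc)
  · intro y hy
    obtain ⟨heq, htop, hbig⟩ := hP y hy
    rcases hasGVal_or_infiniteRank Γ y with ⟨a, ha⟩ | hinf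
    · have hgy : gval Γ y = (a : ℕ∞) := gval_eq_coe_iff.2 ha
      by_cases hab : a ≤ b
      · exact Or.inl (by rw [heq, hgy]; exact_mod_cast hab)
      · exact Or.inr (hbig a hgy (by omega))
    · exact Or.inr (htop (gval_eq_top_iff.2 hinf))

end Aux5
section Aux6

variable {V : Type*} {W : Type*} {X : Type*}

lemma posP_sum_vals {Γ : V → Finset V} {Δ : W → Finset W} :
    ∀ n : ℕ, ∀ p q, (p, q) ∈ PosP (sumGraph Γ Δ) n →
      ∃ c : ℕ, HasGVal Γ p c ∧ HasGVal Δ q c := by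
  intro n
  induction n using Nat.strong_induction_on with
  | _ n IH =>
  intro p q hpq
  match n, hpq with
  | 0, hpq =>
      obtain ⟨h1, h2⟩ := sumGraph_eq_empty_iff.1 (posP_zero.1 hpq)
      exact ⟨0, hasGVal_of_eq (gfun_zero_eq_iff.2 ⟨h1, rfl⟩),
        hasGVal_of_eq (gfun_zero_eq_iff.2 ⟨h2, rfl⟩)⟩
  | (k+1), hpq => ?_
  have CF : ∀ r s, (r, s) ∈ PosP (sumGraph Γ Δ) k →
      ∃ c : ℕ, HasGVal Γ r c ∧ HasGVal Δ s c :=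
    fun r s h => IH k (by omega) r s h
  -- any option of (p, q) is an N-position
  have hoptN : ∀ o ∈ sumGraph Γ Δ (p, q), o ∉ PPos (sumGraph Γ Δ) := by
    intro o ho hoP
    obtain ⟨Z, hZ, hZP⟩ := posP_succ.1 hpq o ho
    obtain ⟨N, hN⟩ := mem_pPos.1 hoP
    exact posP_posN_disj hN (posN_succ.2 ⟨Z, hZ, hZP⟩)
  have halfP : ∃ a, HasGVal Γ p a := by
    by_cases hpt : Γ p = ∅
    · exact ⟨0, hasGVal_of_eq (gfun_zero_eq_iff.2 ⟨hpt, rfl⟩)⟩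
    by_cases hesc : ∃ q' ∈ Δ q, ∃ q'' ∈ Δ q', (p, q'') ∈ PosP (sumGraph Γ Δ) k
    · obtain ⟨q', -, q'', -, hmem⟩ := hesc
      obtain ⟨c, hc, -⟩ := CF _ _ hmem
      exact ⟨c, hc⟩
    push_neg at hesc
    by_cases hfin : ∀ p' ∈ Γ p, ∃ a, HasGVal Γ p' a
    · exact ⟨_, finiteRank_of_options hfin⟩
    push_neg at hfin
    obtain ⟨p₀, hp₀, hp₀inf'⟩ := hfin
    have hp₀inf : InfiniteRank Γ p₀ := (hasGVal_or_infiniteRank Γ p₀).resolve_left (by push_neg; exact hp₀inf')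
    obtain ⟨z₀, hz₀, hcnt₀⟩ := posP_succ.1 hpq (p₀, q) (sumGraph_fst hp₀ q)
    have hbq : ∃ b, HasGVal Δ q b := by
      rcases sumGraph_cases hz₀ with ⟨p'', hp'', rfl⟩ | ⟨q'', hq'', rfl⟩
      · obtain ⟨c, -, hcq⟩ := CF _ _ hcnt₀
        exact ⟨c, hcq⟩
      · obtain ⟨c, hcp, -⟩ := CF _ _ hcnt₀
        exact absurd hp₀inf (not_infiniteRank_of_hasGVal hcp)
    obtain ⟨b, hb⟩ := hbq
    refine ⟨b, hasGVal_of_options_spec ?_ ?_ ?_⟩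
    · -- no option of p has value b
      intro p' hp' hval
      have h0 : HasGVal (sumGraph Γ Δ) (p', q) 0 := by
        have := hasGVal_sum hval hb
        rwa [Nat.xor_self] at this
      exact hoptN (p', q) (sumGraph_fst hp' q) (mem_pPos_iff_hasGVal_zero.2 h0)
    · -- every c < b is the value of an option of p
      intro c hc
      obtain ⟨qc, hqc, hqcv⟩ := hasGVal_mex_exists hb hc
      obtain ⟨Z, hZ, hZP⟩ := posP_succ.1 hpq (p, qc) (sumGraph_snd hqc p)
      rcases sumGraph_cases hZ with ⟨p', hp', rfl⟩ | ⟨q'', hq'', rfl⟩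
      · obtain ⟨d, hdp, hdq⟩ := CF _ _ hZP
        have : d = c := hasGVal_unique hdq hqcv
        exact ⟨p', hp', this ▸ hdp⟩
      · exact absurd hZP (hesc qc hqc q'' hq'')
    · -- infinite-rank options of p have a counter of value b
      intro p' hp' hinf
      obtain ⟨Z, hZ, hZP⟩ := posP_succ.1 hpq (p', q) (sumGraph_fst hp' q)
      rcases sumGraph_cases hZ with ⟨p'', hp'', rfl⟩ | ⟨q'', hq'', rfl⟩
      · obtain ⟨d, hdp, hdq⟩ := CF _ _ hZP
        have : d = b := hasGVal_unique hdq hb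
        exact ⟨p'', hp'', this ▸ hdp⟩
      · obtain ⟨d, hdp, -⟩ := CF _ _ hZP
        exact absurd hinf (not_infiniteRank_of_hasGVal hdp)
  have halfQ : ∃ b, HasGVal Δ q b := by
    by_cases hqt : Δ q = ∅
    · exact ⟨0, hasGVal_of_eq (gfun_zero_eq_iff.2 ⟨hqt, rfl⟩)⟩
    by_cases hesc : ∃ p' ∈ Γ p, ∃ p'' ∈ Γ p', (p'', q) ∈ PosP (sumGraph Γ Δ) k
    · obtain ⟨p', -, p'', -, hmem⟩ := hesc
      obtain ⟨c, -, hc⟩ := CF _ _ hmem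
      exact ⟨c, hc⟩
    push_neg at hesc
    by_cases hfin : ∀ q' ∈ Δ q, ∃ a, HasGVal Δ q' a
    · exact ⟨_, finiteRank_of_options hfin⟩
    push_neg at hfin
    obtain ⟨q₀, hq₀, hq₀inf'⟩ := hfin
    have hq₀inf : InfiniteRank Δ q₀ := (hasGVal_or_infiniteRank Δ q₀).resolve_left (by push_neg; exact hq₀inf')
    obtain ⟨z₀, hz₀, hcnt₀⟩ := posP_succ.1 hpq (p, q₀) (sumGraph_snd hq₀ p)
    have hap : ∃ a, HasGVal Γ p a := by
      rcases sumGraph_cases hz₀ with ⟨p'', hp'', rfl⟩ | ⟨q'', hq'', rfl⟩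
      · obtain ⟨c, -, hcq⟩ := CF _ _ hcnt₀
        exact absurd hq₀inf (not_infiniteRank_of_hasGVal hcq)
      · obtain ⟨c, hcp, -⟩ := CF _ _ hcnt₀
        exact ⟨c, hcp⟩
    obtain ⟨a, ha⟩ := hap
    refine ⟨a, hasGVal_of_options_spec ?_ ?_ ?_⟩
    · intro q' hq' hval
      have h0 : HasGVal (sumGraph Γ Δ) (p, q') 0 := by
        have := hasGVal_sum ha hval
        rwa [Nat.xor_self] at this
      exact hoptN (p, q') (sumGraph_snd hq' p) (mem_pPos_iff_hasGVal_zero.2 h0)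
    · intro c hc
      obtain ⟨pc, hpc, hpcv⟩ := hasGVal_mex_exists ha hc
      obtain ⟨Z, hZ, hZP⟩ := posP_succ.1 hpq (pc, q) (sumGraph_fst hpc q)
      rcases sumGraph_cases hZ with ⟨p'', hp'', rfl⟩ | ⟨q', hq', rfl⟩
      · exact absurd hZP (hesc pc hpc p'' hp'')
      · obtain ⟨d, hdp, hdq⟩ := CF _ _ hZP
        have : d = c := hasGVal_unique hdp hpcv
        exact ⟨q', hq', this ▸ hdq⟩
    · intro q' hq' hinf
      obtain ⟨Z, hZ, hZP⟩ := posP_succ.1 hpq (p, q') (sumGraph_snd hq' p)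
      rcases sumGraph_cases hZ with ⟨p'', hp'', rfl⟩ | ⟨q'', hq'', rfl⟩
      · obtain ⟨d, -, hdq⟩ := CF _ _ hZP
        exact absurd hinf (not_infiniteRank_of_hasGVal hdq)
      · obtain ⟨d, hdp, hdq⟩ := CF _ _ hZP
        have : d = a := hasGVal_unique hdp ha
        exact ⟨q'', hq'', this ▸ hdq⟩
  obtain ⟨a, ha⟩ := halfP
  obtain ⟨b, hb⟩ := halfQ
  have hsum : HasGVal (sumGraph Γ Δ) (p, q) (a ^^^ b) := hasGVal_sum ha hb
  have h0 : HasGVal (sumGraph Γ Δ) (p, q) 0 :=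
    hasGVal_of_eq (posP_iff_gfun_zero.1 hpq)
  have hab : a = b := xor_eq_zero_iff.1 (hasGVal_unique hsum h0)
  exact ⟨a, ha, hab ▸ hb⟩

end Aux6
section Aux7

variable {V : Type*} {W : Type*} {X : Type*}

lemma pPos_sum_iff {Γ : V → Finset V} {Ξ : X → Finset X} {x : V} {z : X} :
    (x, z) ∈ PPos (sumGraph Γ Ξ) ↔ ∃ c : ℕ, HasGVal Γ x c ∧ HasGVal Ξ z c := by
  constructor
  · intro h
    obtain ⟨n, hn⟩ := mem_pPos.1 h
    exact posP_sum_vals n x z hn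
  · rintro ⟨c, hx, hz⟩
    refine mem_pPos_iff_hasGVal_zero.2 ?_
    have := hasGVal_sum hx hz
    rwa [Nat.xor_self] at this

lemma nPos_sum_iff {Γ : V → Finset V} {Ξ : X → Finset X} {x : V} {z : X} :
    (x, z) ∈ NPos (sumGraph Γ Ξ) ↔
      (∃ c, c ∈ ValSet Γ x ∧ HasGVal Ξ z c) ∨ (∃ c, HasGVal Γ x c ∧ c ∈ ValSet Ξ z) := by
  rw [mem_nPos]
  constructor
  · rintro ⟨o, ho, hoP⟩
    rcases sumGraph_cases ho with ⟨x', hx', rfl⟩ | ⟨z', hz', rfl⟩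
    · obtain ⟨c, h1, h2⟩ := pPos_sum_iff.1 hoP
      exact Or.inl ⟨c, ⟨x', hx', h1⟩, h2⟩
    · obtain ⟨c, h1, h2⟩ := pPos_sum_iff.1 hoP
      exact Or.inr ⟨c, h1, ⟨z', hz', h2⟩⟩
  · rintro (⟨c, ⟨x', hx', h1⟩, h2⟩ | ⟨c, h1, ⟨z', hz', h2⟩⟩)
    · exact ⟨(x', z), sumGraph_fst hx' z, pPos_sum_iff.2 ⟨c, h1, h2⟩⟩
    · exact ⟨(x, z'), sumGraph_snd hz' x, pPos_sum_iff.2 ⟨c, h1, h2⟩⟩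

lemma pPos_sum_char_fin {Γ : V → Finset V} {Ξ : X → Finset X} {x : V} {z : X} {a : ℕ}
    (ha : HasGVal Γ x a) :
    (x, z) ∈ PPos (sumGraph Γ Ξ) ↔ HasGVal Ξ z a := by
  rw [pPos_sum_iff]
  constructor
  · rintro ⟨c, h1, h2⟩
    rwa [hasGVal_unique h2 ((hasGVal_unique h1 ha) ▸ h2)] at h2
  · intro h
    exact ⟨a, ha, h⟩

lemma pPos_sum_char_inf {Γ : V → Finset V} {Ξ : X → Finset X} {x : V} {z : X}
    (hx : InfiniteRank Γ x) :
    (x, z) ∉ PPos (sumGraph Γ Ξ) := by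
  intro h
  obtain ⟨c, h1, -⟩ := pPos_sum_iff.1 h
  exact not_infiniteRank_of_hasGVal h1 hx

lemma nPos_sum_char_fin {Γ : V → Finset V} {Ξ : X → Finset X} {x : V} {z : X} {a : ℕ}
    (ha : HasGVal Γ x a) :
    (x, z) ∈ NPos (sumGraph Γ Ξ) ↔
      (∃ d, HasGVal Ξ z d ∧ d ≠ a) ∨ a ∈ ValSet Ξ z := by
  rw [nPos_sum_iff]
  constructor
  · rintro (⟨c, hcV, hzc⟩ | ⟨c, hxc, hcV⟩)
    · refine Or.inl ⟨c, hzc, fun hca => ?_⟩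
      obtain ⟨x', hx', hx'c⟩ := hcV
      exact hasGVal_no_option ha hx' (hca ▸ hx'c)
    · have : c = a := hasGVal_unique hxc ha
      exact Or.inr (this ▸ hcV)
  · rintro (⟨d, hzd, hda⟩ | haV)
    · rcases lt_trichotomy d a with hlt | heq | hlt
      · obtain ⟨x', hx', hx'd⟩ := hasGVal_mex_exists ha hlt
        exact Or.inl ⟨d, ⟨x', hx', hx'd⟩, hzd⟩
      · exact absurd heq hda
      · obtain ⟨z', hz', hz'a⟩ := hasGVal_mex_exists hzd hlt
        exact Or.inr ⟨a, ha, ⟨z', hz', hz'a⟩⟩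
    · exact Or.inr ⟨a, ha, haV⟩

lemma nPos_sum_char_inf {Γ : V → Finset V} {Ξ : X → Finset X} {x : V} {z : X}
    (hx : InfiniteRank Γ x) :
    (x, z) ∈ NPos (sumGraph Γ Ξ) ↔ ∃ c, c ∈ ValSet Γ x ∧ HasGVal Ξ z c := by
  rw [nPos_sum_iff]
  constructor
  · rintro (h | ⟨c, h1, -⟩)
    · exact h
    · exact absurd hx (not_infiniteRank_of_hasGVal h1)
  · exact Or.inl

/-- Two games with the same value data are equivalent. -/
lemma gameEquiv_of_data {Γ : V → Finset V} {Δ : W → Finset W} {x : V} {y : W}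
    (h : (∃ a, HasGVal Γ x a ∧ HasGVal Δ y a) ∨
      (InfiniteRank Γ x ∧ InfiniteRank Δ y ∧ ValSet Γ x = ValSet Δ y)) :
    GameEquiv Γ x Δ y := by
  intro X Ξ z
  have hP : ((x, z) ∈ PPos (sumGraph Γ Ξ)) ↔ ((y, z) ∈ PPos (sumGraph Δ Ξ)) := by
    rcases h with ⟨a, hxa, hya⟩ | ⟨hxi, hyi, -⟩
    · rw [pPos_sum_char_fin hxa, pPos_sum_char_fin hya]
    · simp only [iff_iff_implies_and_implies]
      exact ⟨fun hc => absurd hc (pPos_sum_char_inf hxi),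
        fun hc => absurd hc (pPos_sum_char_inf hyi)⟩
  have hN : ((x, z) ∈ NPos (sumGraph Γ Ξ)) ↔ ((y, z) ∈ NPos (sumGraph Δ Ξ)) := by
    rcases h with ⟨a, hxa, hya⟩ | ⟨hxi, hyi, hVS⟩
    · rw [nPos_sum_char_fin hxa, nPos_sum_char_fin hya]
    · rw [nPos_sum_char_inf hxi, nPos_sum_char_inf hyi, hVS]
  refine ⟨hP, hN, ?_⟩
  unfold DPos
  simp only [Set.mem_compl_iff, Set.mem_union]
  rw [not_iff_not]
  exact or_congr hP hN

end Aux7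
section Aux8

variable {V : Type*} {W : Type*} {X : Type*}

/-- Any position with a self-loop has infinite rank. -/
lemma infiniteRank_of_self_mem {Γ : V → Finset V} {x : V} (hx : x ∈ Γ x) :
    InfiniteRank Γ x := by
  intro n
  induction n with
  | zero => rw [gfun_zero, if_neg (Finset.ne_empty_of_mem hx)]
  | succ n ih =>
      rw [gfun_succ, if_neg]
      intro hC
      rcases hC x hx with hle | ⟨z, hz, hzv⟩
      · rw [ih] at hle; exact enat_top_not_le hle
      · exact mexF_not_attained z hz hzv

/-- The model finite game: a nim heap of size `k+1` together with a vertex `∞(S)`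
with a self-loop and moves to the heap positions with values in `S`. -/
noncomputable def auxGame (k : ℕ) (S : Finset ℕ) :
    Option (Fin (k+1)) → Finset (Option (Fin (k+1)))
  | some j => (Finset.univ.filter (fun i => i < j)).image some
  | none => insert none ((Finset.univ.filter (fun i : Fin (k+1) => (i : ℕ) ∈ S)).image some)

lemma mem_auxGame_some {k : ℕ} {S : Finset ℕ} {j : Fin (k+1)} {o : Option (Fin (k+1))} :
    o ∈ auxGame k S (some j) ↔ ∃ i : Fin (k+1), i < j ∧ o = some i := by
  unfold auxGame
  simp only [Finset.mem_image, Finset.mem_filter, Finset.mem_univ, true_and]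
  constructor
  · rintro ⟨i, hi, rfl⟩; exact ⟨i, hi, rfl⟩
  · rintro ⟨i, hi, rfl⟩; exact ⟨i, hi, rfl⟩

lemma mem_auxGame_none {k : ℕ} {S : Finset ℕ} {o : Option (Fin (k+1))} :
    o ∈ auxGame k S none ↔ o = none ∨ ∃ i : Fin (k+1), (i : ℕ) ∈ S ∧ o = some i := by
  unfold auxGame
  simp only [Finset.mem_insert, Finset.mem_image, Finset.mem_filter, Finset.mem_univ, true_and]
  constructor
  · rintro (rfl | ⟨i, hi, rfl⟩)
    · exact Or.inl rfl
    · exact Or.inr ⟨i, hi, rfl⟩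
  · rintro (rfl | ⟨i, hi, rfl⟩)
    · exact Or.inl rfl
    · exact Or.inr ⟨i, hi, rfl⟩

lemma auxGame_none_self {k : ℕ} {S : Finset ℕ} : none ∈ auxGame k S none :=
  mem_auxGame_none.2 (Or.inl rfl)

lemma auxGame_heap_val {k : ℕ} {S : Finset ℕ} :
    ∀ (j : Fin (k+1)), HasGVal (auxGame k S) (some j) j.val := by
  have key : ∀ v : ℕ, ∀ j : Fin (k+1), j.val = v → HasGVal (auxGame k S) (some j) j.val := by
    intro v
    induction v using Nat.strong_induction_on with
    | _ v IH =>
    intro j hj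
    subst hj
    refine hasGVal_of_options_spec ?_ ?_ ?_
    · rintro y hy hyv
      obtain ⟨i, hij, rfl⟩ := mem_auxGame_some.1 hy
      have hlt : i.val < j.val := Fin.lt_def.1 hij
      have hival := IH i.val hlt i rfl
      have := hasGVal_unique hival hyv
      omega
    · intro c hc
      have hck : c < k + 1 := by omega
      refine ⟨some ⟨c, hck⟩, mem_auxGame_some.2 ⟨⟨c, hck⟩, Fin.lt_def.2 (by simpa using hc), rfl⟩, ?_⟩
      exact IH c hc ⟨c, hck⟩ rfl
    · intro y hy hinf
      obtain ⟨i, hij, rfl⟩ := mem_auxGame_some.1 hy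
      have hival := IH i.val (Fin.lt_def.1 hij) i rfl
      exact absurd hinf (not_infiniteRank_of_hasGVal hival)
  exact fun j => key j.val j rfl

lemma infiniteRank_auxGame_none {k : ℕ} {S : Finset ℕ} :
    InfiniteRank (auxGame k S) none :=
  infiniteRank_of_self_mem auxGame_none_self

lemma valSet_auxGame_none {k : ℕ} {S : Finset ℕ} (hS : ∀ a ∈ S, a ≤ k) :
    ValSet (auxGame k S) none = {a : ℕ | a ∈ S} := by
  ext a
  constructor
  · rintro ⟨y, hy, hval⟩
    rcases mem_auxGame_none.1 hy with rfl | ⟨i, hi, rfl⟩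
    · exact absurd infiniteRank_auxGame_none (not_infiniteRank_of_hasGVal hval)
    · have : a = i.val := hasGVal_unique hval (auxGame_heap_val i)
      exact this ▸ hi
  · intro ha
    have hak : a ≤ k := hS a ha
    refine ⟨some ⟨a, by omega⟩, mem_auxGame_none.2 (Or.inr ⟨⟨a, by omega⟩, ha, rfl⟩), ?_⟩
    exact auxGame_heap_val _

end Aux8

/-- every locally finite game is equivalent to some finite game. -/
theorem stmt7 {V : Type*} (Γ : V → Finset V) (x : V) :
    ∃ (W : Type) (_ : Finite W) (Δ : W → Finset W) (y : W), GameEquiv Γ x Δ y := by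
  rcases hasGVal_or_infiniteRank Γ x with ⟨a, ha⟩ | hinf
  · refine ⟨Option (Fin (a+1)), inferInstance, auxGame a ∅, some ⟨a, by omega⟩, ?_⟩
    exact gameEquiv_of_data (Or.inl ⟨a, ha, auxGame_heap_val _⟩)
  · set k := (Γ x).sup (fun y => (gval Γ y).toNat) with hk
    have hbound : ∀ a ∈ ValSet Γ x, a ≤ k := by
      rintro a ⟨y, hy, hval⟩
      have h1 : gval Γ y = (a : ℕ∞) := gval_eq_coe_iff.2 hval
      have h2 : (gval Γ y).toNat = a := by rw [h1, ENat.toNat_coe]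
      calc a = (gval Γ y).toNat := h2.symm
        _ ≤ k := Finset.le_sup (f := fun y => (gval Γ y).toNat) hy
    set S : Finset ℕ := (Finset.range (k+1)).filter (fun a => a ∈ ValSet Γ x) with hS
    have hSk : ∀ a ∈ S, a ≤ k := fun a haS => by
      have := (Finset.mem_filter.1 haS).1
      rw [Finset.mem_range] at this
      omega
    have hVS : ValSet Γ x = {a : ℕ | a ∈ S} := by
      ext a
      simp only [Set.mem_setOf_eq, hS, Finset.mem_filter, Finset.mem_range]
      exact ⟨fun h => ⟨by have := hbound a h; omega, h⟩, fun h => h.2⟩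
    refine ⟨Option (Fin (k+1)), inferInstance, auxGame k S, none, ?_⟩
    refine gameEquiv_of_data (Or.inr ⟨hinf, infiniteRank_auxGame_none, ?_⟩)
    rw [valSet_auxGame_none hSk, hVS]
end

section
/- Let V be a locally finite game graph, x ∈ V, n ∈ ℕ and m ∈ ℕ. The following are equivalent: (a) rank(x) ≤ n and 𝒢(x) = m; (b) both of the following hold: (i) for each i with 0 ≤ i ≤ m−1 there exists yᵢ ∈ Γ(x) with rank(yᵢ) < n and 𝒢(yᵢ) = i; and (ii) for every y ∈ Γ(x), either rank(y) < n and 𝒢(y) < m, or there exists z ∈ Γ(y) with rank(z) < n and 𝒢(z) = m. -/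
open scoped Classical

universe u

lemma mexF_mem {V : Type*} (s : Finset V) (g : V → ℕ∞) :
    ∀ y ∈ s, g y ≠ (mexF s g : ℕ∞) := by
  have hne : {n : ℕ | ∀ y ∈ s, g y ≠ (n : ℕ∞)}.Nonempty := by
    refine ⟨(s.sup fun y => (g y).toNat) + 1, fun y hy hgy => ?_⟩
    have h1 : (g y).toNat ≤ s.sup fun y => (g y).toNat := Finset.le_sup (f := fun y => (g y).toNat) hy
    rw [hgy, ENat.toNat_coe] at h1
    omega
  exact Nat.sInf_mem hne

lemma mexF_lt {V : Type*} (s : Finset V) (g : V → ℕ∞) :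
    ∀ i < mexF s g, ∃ y ∈ s, g y = (i : ℕ∞) := by
  intro i hi
  have := Nat.notMem_of_lt_sInf hi
  simpa using this

lemma mexF_eq_of {V : Type*} {s : Finset V} {g : V → ℕ∞} {m : ℕ}
    (h1 : ∀ y ∈ s, g y ≠ (m : ℕ∞)) (h2 : ∀ i < m, ∃ y ∈ s, g y = (i : ℕ∞)) :
    mexF s g = m := by
  refine le_antisymm (Nat.sInf_le h1) (le_csInf ⟨m, h1⟩ fun k hk => ?_)
  by_contra hlt
  push_neg at hlt
  obtain ⟨y, hy, hgy⟩ := h2 k hlt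
  exact hk y hy hgy

lemma Gfun_succ_eq_coe {V : Type*} {Γ : V → Finset V} {n : ℕ} {x : V} {m : ℕ}
    (h : Gfun Γ (n + 1) x = (m : ℕ∞)) :
    mexF (Γ x) (Gfun Γ n) = m ∧
      ∀ y ∈ Γ x, Gfun Γ n y ≤ (m : ℕ∞) ∨ ∃ z ∈ Γ y, Gfun Γ n z = (m : ℕ∞) := by
  rw [Gfun] at h
  simp only at h
  split_ifs at h with hc
  · rw [Nat.cast_inj] at h
    exact ⟨h, h ▸ hc⟩
  · exact absurd h.symm (by simp)

lemma Gfun_succ_eq_coe' {V : Type*} {Γ : V → Finset V} {n : ℕ} {x : V} {m : ℕ}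
    (hm : mexF (Γ x) (Gfun Γ n) = m)
    (hc : ∀ y ∈ Γ x, Gfun Γ n y ≤ (m : ℕ∞) ∨ ∃ z ∈ Γ y, Gfun Γ n z = (m : ℕ∞)) :
    Gfun Γ (n + 1) x = (m : ℕ∞) := by
  rw [Gfun]
  simp only
  rw [if_pos (hm ▸ hc), hm]

lemma Gfun_succ {V : Type*} (Γ : V → Finset V) :
    ∀ (n : ℕ) (x : V), Gfun Γ n x ≠ ⊤ → Gfun Γ (n + 1) x = Gfun Γ n x := by
  intro n
  induction n with
  | zero =>
    intro x h
    have he : Γ x = ∅ := by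
      by_contra he
      rw [show Gfun Γ 0 x = if Γ x = ∅ then 0 else ⊤ from rfl, if_neg he] at h
      exact h rfl
    have h0 : Gfun Γ 0 x = 0 := by
      rw [show Gfun Γ 0 x = if Γ x = ∅ then 0 else ⊤ from rfl, if_pos he]
    rw [h0]
    have hm : mexF (Γ x) (Gfun Γ 0) = 0 := mexF_eq_of (by simp [he]) (by simp)
    have := Gfun_succ_eq_coe' hm (by simp [he])
    simpa using this
  | succ n ih =>
    intro x h
    obtain ⟨m, hm⟩ : ∃ m : ℕ, Gfun Γ (n + 1) x = (m : ℕ∞) := by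
      lift Gfun Γ (n + 1) x to ℕ using h with m; exact ⟨m, rfl⟩
    rw [hm]
    obtain ⟨hmex, hc⟩ := Gfun_succ_eq_coe hm
    have ha : ∀ y ∈ Γ x, Gfun Γ (n + 1) y ≠ (m : ℕ∞) := by
      intro y hy hcontra
      by_cases ht : Gfun Γ n y = ⊤
      · -- y newly became finite with value m
        obtain ⟨hmexy, _⟩ := Gfun_succ_eq_coe hcontra
        rcases hc y hy with h1 | ⟨z, hz, hz2⟩
        · rw [ht] at h1; exact absurd h1 (by simp)
        · exact mexF_mem (Γ y) (Gfun Γ n) z hz (hmexy ▸ hz2)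
      · rw [ih y ht] at hcontra
        exact mexF_mem (Γ x) (Gfun Γ n) y hy (hmex ▸ hcontra)
    have hb : ∀ i < m, ∃ y ∈ Γ x, Gfun Γ (n + 1) y = (i : ℕ∞) := by
      intro i hi
      obtain ⟨y, hy, hgy⟩ := mexF_lt (Γ x) (Gfun Γ n) i (hmex ▸ hi)
      exact ⟨y, hy, by rw [ih y (by rw [hgy]; simp), hgy]⟩
    refine Gfun_succ_eq_coe' (mexF_eq_of ha hb) fun y hy => ?_
    rcases hc y hy with h1 | ⟨z, hz, hz2⟩
    · left
      rw [ih y (fun ht => by rw [ht] at h1; exact absurd h1 (by simp))]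
      exact h1
    · exact Or.inr ⟨z, hz, by rw [ih z (by rw [hz2]; simp), hz2]⟩

lemma Gfun_stable {V : Type*} (Γ : V → Finset V) {n k : ℕ} (hnk : n ≤ k) {x : V}
    (h : Gfun Γ n x ≠ ⊤) : Gfun Γ k x = Gfun Γ n x := by
  induction k with
  | zero => rw [Nat.le_zero.mp hnk]
  | succ k ih =>
    rcases Nat.lt_or_ge n (k + 1) with hlt | hge
    · have hk := ih (Nat.lt_succ_iff.mp hlt)
      rw [Gfun_succ Γ k x (hk ▸ h), hk]
    · rw [Nat.le_antisymm hnk hge]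

lemma rank_le_iff {V : Type*} (Γ : V → Finset V) (x : V) (n : ℕ) :
    rank Γ x ≤ (n : ℕ∞) ↔ Gfun Γ n x ≠ ⊤ := by
  constructor
  · intro h
    by_contra htop
    have hlb : ((n : ℕ∞) + 1) ≤ rank Γ x := by
      apply le_sInf
      rintro _ ⟨k, hk, rfl⟩
      have hnk : ¬ k ≤ n := fun hle => hk (by
        have := Gfun_stable Γ hle (x := x)
        by_contra h'
        rw [this h'] at htop
        exact h' htop)
      exact_mod_cast Nat.succ_le_of_lt (Nat.lt_of_not_le hnk)
    have h2 : (n + 1 : ℕ) ≤ n := by exact_mod_cast hlb.trans h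
    omega
  · intro h
    exact sInf_le ⟨n, h, rfl⟩

lemma key_iff {V : Type*} (Γ : V → Finset V) (x : V) (n m : ℕ) :
    (rank Γ x ≤ (n : ℕ∞) ∧ HasGVal Γ x m) ↔ Gfun Γ n x = (m : ℕ∞) := by
  constructor
  · rintro ⟨hr, n₀, hval⟩
    have hne := (rank_le_iff Γ x n).mp hr
    have h1 : Gfun Γ (max n n₀) x = Gfun Γ n x := Gfun_stable Γ (le_max_left _ _) hne
    rw [← h1, hval _ (le_max_right _ _)]
  · intro h
    refine ⟨(rank_le_iff Γ x n).mpr (by rw [h]; simp), n, fun k hk => ?_⟩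
    rw [Gfun_stable Γ hk (by rw [h]; simp), h]

lemma Gfun_option_ne {V : Type*} (Γ : V → Finset V) (n : ℕ) (y : V) (m : ℕ)
    (h : Gfun Γ n y = (m : ℕ∞)) : ∀ z ∈ Γ y, Gfun Γ n z ≠ (m : ℕ∞) := by
  intro z hz hcontra
  cases n with
  | zero =>
    have : Γ y = ∅ := by
      by_contra he
      rw [show Gfun Γ 0 y = if Γ y = ∅ then 0 else ⊤ from rfl, if_neg he] at h
      exact (by simp : (⊤ : ℕ∞) ≠ (m : ℕ∞)) h
    rw [this] at hz
    exact absurd hz (Finset.notMem_empty z)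
  | succ n =>
    obtain ⟨hmex, hc⟩ := Gfun_succ_eq_coe h
    by_cases ht : Gfun Γ n z = ⊤
    · obtain ⟨hmexz, _⟩ := Gfun_succ_eq_coe hcontra
      rcases hc z hz with h1 | ⟨w, hw, hw2⟩
      · rw [ht] at h1; exact absurd h1 (by simp)
      · exact mexF_mem (Γ z) (Gfun Γ n) w hw (hmexz ▸ hw2)
    · rw [Gfun_succ Γ n z ht] at hcontra
      exact mexF_mem (Γ y) (Gfun Γ n) z hz (hmex ▸ hcontra)

/-- `rank(x) ≤ n` and `𝒢(x) = m` iff (i) for each `i < m` there is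
`yᵢ ∈ Γ(x)` with `rank(yᵢ) < n` and `𝒢(yᵢ) = i`, and (ii) every `y ∈ Γ(x)`
either has `rank(y) < n` and `𝒢(y) < m`, or has some `z ∈ Γ(y)` with
`rank(z) < n` and `𝒢(z) = m`. -/
theorem stmt8 {V : Type*} (Γ : V → Finset V) (x : V) (n m : ℕ) :
    (rank Γ x ≤ (n : ℕ∞) ∧ HasGVal Γ x m) ↔
      ((∀ i < m, ∃ y ∈ Γ x, rank Γ y < (n : ℕ∞) ∧ HasGVal Γ y i) ∧
        (∀ y ∈ Γ x,
          (rank Γ y < (n : ℕ∞) ∧ ∃ m' < m, HasGVal Γ y m') ∨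
          (∃ z ∈ Γ y, rank Γ z < (n : ℕ∞) ∧ HasGVal Γ z m))) := by
  rw [key_iff]
  cases n with
  | zero =>
    have hnl : ∀ y : V, ¬ rank Γ y < ((0 : ℕ) : ℕ∞) := by simp
    constructor
    · intro h
      have he : Γ x = ∅ := by
        by_contra he
        rw [show Gfun Γ 0 x = if Γ x = ∅ then 0 else ⊤ from rfl, if_neg he] at h
        exact (by simp : (⊤ : ℕ∞) ≠ (m : ℕ∞)) h
      rw [show Gfun Γ 0 x = if Γ x = ∅ then 0 else ⊤ from rfl, if_pos he] at h
      have hm : m = 0 := by exact_mod_cast h.symm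
      subst hm
      exact ⟨fun i hi => absurd hi (by omega),
        fun y hy => absurd hy (by simp [he])⟩
    · rintro ⟨h1, h2⟩
      have he : Γ x = ∅ := Finset.eq_empty_iff_forall_notMem.mpr fun y hy => by
        rcases h2 y hy with ⟨h, _⟩ | ⟨z, _, h, _⟩ <;> exact hnl _ h
      have hm : m = 0 := by
        by_contra hm
        obtain ⟨y, hy, h, _⟩ := h1 0 (Nat.pos_of_ne_zero hm)
        exact hnl _ h
      subst hm
      rw [show Gfun Γ 0 x = if Γ x = ∅ then 0 else ⊤ from rfl, if_pos he]
      simp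
  | succ n =>
    have hlt : ∀ (y : V) (i : ℕ),
        (rank Γ y < ((n + 1 : ℕ) : ℕ∞) ∧ HasGVal Γ y i) ↔ Gfun Γ n y = (i : ℕ∞) := by
      intro y i
      rw [← key_iff]
      have h' : rank Γ y < ((n + 1 : ℕ) : ℕ∞) ↔ rank Γ y ≤ (n : ℕ∞) := by
        rw [show ((n + 1 : ℕ) : ℕ∞) = (n : ℕ∞) + 1 by push_cast; ring]
        exact ENat.lt_add_one_iff (by simp)
      rw [h']
    constructor
    · intro h
      obtain ⟨hmex, hc⟩ := Gfun_succ_eq_coe h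
      refine ⟨fun i hi => ?_, fun y hy => ?_⟩
      · obtain ⟨y, hy, hgy⟩ := mexF_lt (Γ x) (Gfun Γ n) i (hmex ▸ hi)
        exact ⟨y, hy, (hlt y i).mpr hgy⟩
      · rcases hc y hy with h1 | ⟨z, hz, hz2⟩
        · left
          have hne : Gfun Γ n y ≠ (m : ℕ∞) := by
            have := mexF_mem (Γ x) (Gfun Γ n) y hy
            rwa [hmex] at this
          have hnt : Gfun Γ n y ≠ ⊤ := fun ht => by
            rw [ht] at h1; exact absurd h1 (by simp)
          obtain ⟨k, hk⟩ : ∃ k : ℕ, Gfun Γ n y = (k : ℕ∞) :=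
            ⟨(Gfun Γ n y).toNat, (ENat.coe_toNat hnt).symm⟩
          rw [hk] at h1 hne
          have hk1 : k ≤ m := by exact_mod_cast h1
          have hk2 : k ≠ m := fun hkm => hne (by exact_mod_cast hkm)
          have := (hlt y k).mpr hk
          exact ⟨this.1, k, lt_of_le_of_ne hk1 hk2, this.2⟩
        · exact Or.inr ⟨z, hz, (hlt z m).mpr hz2⟩
    · rintro ⟨h1, h2⟩
      have hne : ∀ y ∈ Γ x, Gfun Γ n y ≠ (m : ℕ∞) := by
        intro y hy hcontra
        rcases h2 y hy with ⟨hr, m', hm', hv⟩ | ⟨z, hz, hrz⟩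
        · have := (hlt y m').mp ⟨hr, hv⟩
          rw [hcontra] at this
          have : m = m' := by exact_mod_cast this
          omega
        · exact Gfun_option_ne Γ n y m hcontra z hz ((hlt z m).mp hrz)
      have hc : ∀ y ∈ Γ x, Gfun Γ n y ≤ (m : ℕ∞) ∨ ∃ z ∈ Γ y, Gfun Γ n z = (m : ℕ∞) := by
        intro y hy
        rcases h2 y hy with ⟨hr, m', hm', hv⟩ | ⟨z, hz, hrz⟩
        · left
          rw [(hlt y m').mp ⟨hr, hv⟩]
          exact_mod_cast le_of_lt hm'
        · exact Or.inr ⟨z, hz, (hlt z m).mp hrz⟩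
      have hex : ∀ i < m, ∃ y ∈ Γ x, Gfun Γ n y = (i : ℕ∞) := fun i hi => by
        obtain ⟨y, hy, h⟩ := h1 i hi
        exact ⟨y, hy, (hlt y i).mp h⟩
      exact Gfun_succ_eq_coe' (mexF_eq_of hne hex) hc
end

section
/- Every locally finite game graph that is a tree (with some root o) admits at least one mex labelling. -/
open scoped Classical

universe u

/-- Auxiliary: iterated mex approximation, starting from the zero labelling. -/
noncomputable def mexApprox {V : Type*} (Γ : V → Finset V) : ℕ → V → ℕ
  | 0 => fun _ => 0
  | k + 1 => fun x => sInf {n : ℕ | ∀ y ∈ Γ x, mexApprox Γ k y ≠ n}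

lemma mex_le_card {V : Type*} (s : Finset V) (g : V → ℕ) :
    sInf {n : ℕ | ∀ y ∈ s, g y ≠ n} ≤ s.card := by
  have hlt : (s.image g).card < (Finset.range (s.card + 1)).card := by
    have := Finset.card_image_le (s := s) (f := g)
    simpa using Nat.lt_succ_of_le this
  have hns : ¬ (Finset.range (s.card + 1) ⊆ s.image g) := fun hsub =>
    absurd (Finset.card_le_card hsub) (not_le.mpr hlt)
  obtain ⟨n, hn1, hn2⟩ := Finset.not_subset.mp hns
  have hmem : n ∈ {n : ℕ | ∀ y ∈ s, g y ≠ n} := by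
    intro y hy hgy
    exact hn2 (Finset.mem_image.mpr ⟨y, hy, hgy⟩)
  calc sInf {n : ℕ | ∀ y ∈ s, g y ≠ n} ≤ n := Nat.sInf_le hmem
    _ ≤ s.card := Nat.lt_succ_iff.mp (Finset.mem_range.mp hn1)

lemma mexApprox_le_card {V : Type*} (Γ : V → Finset V) (k : ℕ) (x : V) :
    mexApprox Γ k x ≤ (Γ x).card := by
  cases k with
  | zero => simp [mexApprox]
  | succ k => exact mex_le_card _ _

/-- every locally finite game graph which is a tree admits at
least one mex labelling. -/
theorem stmt12 {V : Type*} (Γ : V → Finset V) (o : V) (h : IsTree Γ o) :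
    ∃ f : V → ℕ, MexLabelling Γ f := by
  classical
  -- the depth function, via the unique walks from the root
  choose w hw using h.2
  set d : V → ℕ := fun x => (w x).length with hd_def
  have hd : ∀ x, ∀ y ∈ Γ x, d y = d x + 1 := by
    intro x y hy
    obtain ⟨⟨hh, hl, hc⟩, _⟩ := hw x
    have hne : w x ≠ [] := by
      intro h0; rw [h0] at hh; simp at hh
    have hwalk : IsWalk Γ o y (w x ++ [y]) := by
      refine ⟨?_, ?_, ?_⟩
      · cases hxw : w x with
        | nil => exact absurd hxw hne
        | cons a l => rw [hxw] at hh; simpa using hh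
      · simp
      · refine List.isChain_append.mpr ⟨hc, List.isChain_singleton _, ?_⟩
        intro a ha b hb
        rw [hl] at ha
        simp at ha hb
        rw [← ha, ← hb]; exact hy
    have := (hw y).2 _ hwalk
    simp only [hd_def]
    rw [← this]
    simp
  -- finite approximations: for each finite set t, a labelling satisfying the
  -- mex condition at each vertex of t
  set B : V → ℕ := fun x => (Γ x).card with hB
  set g : Finset V → V → ℕ :=
    fun t x => mexApprox Γ (t.sup d + 1 - d x) x with hg
  have hgB : ∀ t x, g t x ≤ B x := fun t x => mexApprox_le_card Γ _ x
  have hgood : ∀ t : Finset V, ∀ x ∈ t,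
      g t x = sInf {n : ℕ | ∀ y ∈ Γ x, g t y ≠ n} := by
    intro t x hx
    have hxN : d x ≤ t.sup d := Finset.le_sup hx
    have h1 : t.sup d + 1 - d x = (t.sup d - d x) + 1 := by omega
    have h2 : ∀ y ∈ Γ x, t.sup d + 1 - d y = t.sup d - d x := by
      intro y hy
      have := hd x y hy
      omega
    simp only [hg, h1, mexApprox]
    congr 1
    ext n
    constructor
    · intro hn y hy
      rw [h2 y hy]; exact hn y hy
    · intro hn y hy
      have := hn y hy; rwa [h2 y hy] at this
  -- pass to an ultrafilter limit
  let U : Ultrafilter (Finset V) := Ultrafilter.of Filter.atTop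
  have hUle : (U : Filter (Finset V)) ≤ Filter.atTop := Ultrafilter.of_le _
  have hvex : ∀ x : V, ∃ v : ℕ, {t : Finset V | g t x = v} ∈ U := by
    intro x
    by_contra hcon
    push_neg at hcon
    have hcompl : ∀ v, {t : Finset V | g t x = v}ᶜ ∈ U := fun v =>
      (Ultrafilter.compl_mem_iff_notMem).mpr (hcon v)
    have hinter : (⋂ v ∈ Finset.range (B x + 1), {t : Finset V | g t x = v}ᶜ)
        ∈ U := by
      refine (Filter.biInter_mem (Finset.finite_toSet _)).mpr ?_
      intro v _
      exact hcompl v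
    obtain ⟨t, ht⟩ := Filter.nonempty_of_mem hinter
    simp only [Set.mem_iInter, Set.mem_compl_iff, Set.mem_setOf_eq] at ht
    exact ht (g t x) (Finset.mem_range.mpr (Nat.lt_succ_of_le (hgB t x))) rfl
  choose f hf using hvex
  refine ⟨f, ?_⟩
  intro x
  -- the set of t where everything relevant agrees is in U, hence nonempty
  have hmem1 : {t : Finset V | x ∈ t} ∈ U := by
    apply hUle
    exact Filter.mem_atTop_sets.mpr ⟨{x}, fun t ht => ht (Finset.mem_singleton_self x)⟩
  have hmem2 : (⋂ y ∈ (Γ x : Set V), {t : Finset V | g t y = f y}) ∈ U := by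
    refine (Filter.biInter_mem (Finset.finite_toSet _)).mpr ?_
    intro y _
    exact hf y
  have hmem : ({t : Finset V | x ∈ t} ∩ {t : Finset V | g t x = f x} ∩
      ⋂ y ∈ (Γ x : Set V), {t : Finset V | g t y = f y}) ∈ U :=
    Filter.inter_mem (Filter.inter_mem hmem1 (hf x)) hmem2
  obtain ⟨t, ⟨⟨hxt, hgx⟩, hgy⟩⟩ := Filter.nonempty_of_mem hmem
  simp only [Set.mem_iInter, Set.mem_setOf_eq, Finset.mem_coe] at hxt hgx hgy
  have := hgood t x hxt
  rw [hgx] at this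
  rw [this]
  congr 1
  ext n
  constructor
  · intro hn y hy hfy
    exact hn y hy (by rw [hgy y hy]; exact hfy)
  · intro hn y hy hgyn
    exact hn y hy (by rw [← hgy y hy]; exact hgyn)
end
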